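/- For the three-dimensional dust system (γ = 1): Σ' = -Σ(A(AC₂v + v² + 1) + v)/v, A' = -C₂A³ + AΣ(C₂Σ + 2) + A, v' = (v² - 1)(Av - Σ)/v, with C₂ > 0, the point (Σ,A,v) = (0, 1/√C₂, -1) is an equilibrium whose Jacobian has eigenvalues {-2/√C₂, 2/√C₂ - 2, -2}; hence it is a hyperbolic sink for C₂ > 1, a hyperbolic saddle for 0 < C₂ < 1, and non-hyperbolic for C₂ = 1. -/

import Mathlib

noncomputable section

/-- Three-dimensional dust system (γ = 1) in the variables `(Σ, A, v)`:
`Σ' = -Σ(A(AC₂v + v² + 1) + v)/v`, `A' = -C₂A³ + AΣ(C₂Σ + 2) + A`,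
`v' = (v² - 1)(Av - Σ)/v`. -/
def Fdust (C₂ : ℝ) : ℝ × ℝ × ℝ → ℝ × ℝ × ℝ := fun p =>
  let S := p.1; let A := p.2.1; let v := p.2.2
  (-S * (A * (A * C₂ * v + v ^ 2 + 1) + v) / v,
   -C₂ * A ^ 3 + A * S * (C₂ * S + 2) + A,
   (v ^ 2 - 1) * (A * v - S) / v)

/-- If the directional derivative of `f` along `w` at `p` equals `lam • w`,
and `f` is differentiable at `p`, then `lam` is an eigenvalue of the Jacobian. -/
lemma eig_of_line {f : ℝ×ℝ×ℝ → ℝ×ℝ×ℝ} {p w : ℝ×ℝ×ℝ} {lam : ℝ}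
    (hd : DifferentiableAt ℝ f p) (hw : w ≠ 0)
    (h : HasDerivAt (fun t : ℝ => f (p + t • w)) (lam • w) 0) :
    Module.End.HasEigenvalue ((fderiv ℝ f p).toLinearMap) lam := by
  have h1 : fderiv ℝ f p w = lam • w :=
    HasDerivAt.unique (hd.hasFDerivAt.hasLineDerivAt w) h
  exact Module.End.hasEigenvalue_of_hasEigenvector
    ⟨Module.End.mem_eigenspace_iff.mpr h1, hw⟩

/-- The point `(Σ, A, v) = (0, 1/√C₂, -1)` is an equilibrium of the dust system
whose Jacobian has eigenvalues `{-2/√C₂, 2/√C₂ - 2, -2}`; hence it is a hyperbolic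
sink for `C₂ > 1`, a hyperbolic saddle for `0 < C₂ < 1`, and non-hyperbolic for
`C₂ = 1`. -/
theorem P6_dust_stability (C₂ : ℝ) (hC : 0 < C₂) :
    Fdust C₂ (0, 1 / Real.sqrt C₂, -1) = 0 ∧
    Module.End.HasEigenvalue
      ((fderiv ℝ (Fdust C₂) (0, 1 / Real.sqrt C₂, -1)).toLinearMap)
      (-2 / Real.sqrt C₂) ∧
    Module.End.HasEigenvalue
      ((fderiv ℝ (Fdust C₂) (0, 1 / Real.sqrt C₂, -1)).toLinearMap)
      (2 / Real.sqrt C₂ - 2) ∧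
    Module.End.HasEigenvalue
      ((fderiv ℝ (Fdust C₂) (0, 1 / Real.sqrt C₂, -1)).toLinearMap) (-2) ∧
    -2 / Real.sqrt C₂ < 0 ∧ (-2 : ℝ) < 0 ∧
    (1 < C₂ → 2 / Real.sqrt C₂ - 2 < 0) ∧
    (C₂ < 1 → 0 < 2 / Real.sqrt C₂ - 2) ∧
    (C₂ = 1 → 2 / Real.sqrt C₂ - 2 = 0) := by
  have hs0 : 0 < Real.sqrt C₂ := Real.sqrt_pos.mpr hC
  have hs : Real.sqrt C₂ ≠ 0 := ne_of_gt hs0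
  have hsq : Real.sqrt C₂ * Real.sqrt C₂ = C₂ := Real.mul_self_sqrt hC.le
  set s : ℝ := 1 / Real.sqrt C₂ with hsdef
  have hCs : C₂ * s ^ 2 = 1 := by
    rw [hsdef]; field_simp; rw [Real.sq_sqrt hC.le]
  have hCs' : C₂ * s = Real.sqrt C₂ := by
    rw [hsdef]; field_simp; rw [Real.sq_sqrt hC.le]
  -- differentiability at the point
  have hdiff : DifferentiableAt ℝ (Fdust C₂) (0, s, -1) := by
    have hne : (((0:ℝ), s, (-1:ℝ)) : ℝ×ℝ×ℝ).2.2 ≠ 0 := by norm_num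
    have hv : DifferentiableAt ℝ (fun q : ℝ×ℝ×ℝ => q.2.2) (0, s, -1) := by fun_prop
    have hinv : DifferentiableAt ℝ (fun q : ℝ×ℝ×ℝ => (q.2.2)⁻¹) (0, s, -1) := hv.inv hne
    have h1 : DifferentiableAt ℝ
        (fun q : ℝ×ℝ×ℝ => -q.1 * (q.2.1 * (q.2.1 * C₂ * q.2.2 + q.2.2 ^ 2 + 1) + q.2.2) / q.2.2)
        (0, s, -1) := by
      simp only [div_eq_mul_inv]
      exact DifferentiableAt.mul (by fun_prop) hinv
    have h2 : DifferentiableAt ℝ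
        (fun q : ℝ×ℝ×ℝ => -C₂ * q.2.1 ^ 3 + q.2.1 * q.1 * (C₂ * q.1 + 2) + q.2.1)
        (0, s, -1) := by fun_prop
    have h3 : DifferentiableAt ℝ
        (fun q : ℝ×ℝ×ℝ => (q.2.2 ^ 2 - 1) * (q.2.1 * q.2.2 - q.1) / q.2.2)
        (0, s, -1) := by
      simp only [div_eq_mul_inv]
      exact DifferentiableAt.mul (by fun_prop) hinv
    exact h1.prodMk (h2.prodMk h3)
  -- eigenvalue -2/√C₂, eigenvector (0,0,1)
  have e1 : Module.End.HasEigenvalue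
      ((fderiv ℝ (Fdust C₂) (0, s, -1)).toLinearMap) (-2 / Real.sqrt C₂) := by
    apply eig_of_line hdiff (w := ((0:ℝ),(0:ℝ),(1:ℝ))) (by simp [Prod.ext_iff])
    have hq : (fun t : ℝ => Fdust C₂ ((0, s, -1) + t • ((0:ℝ),(0:ℝ),(1:ℝ)))) =
        fun t : ℝ => ((0:ℝ), -C₂ * s ^ 3 + s,
          ((-1+t)^2 - 1) * (s * (-1+t)) / (-1+t)) := by
      funext t
      simp only [Fdust, Prod.mk_add_mk, Prod.smul_mk, smul_eq_mul, Prod.mk.injEq]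
      refine ⟨by ring, by ring, by ring⟩
    have hval : (-2 / Real.sqrt C₂) • (((0:ℝ),(0:ℝ),(1:ℝ)) : ℝ×ℝ×ℝ) =
        ((0:ℝ), (0:ℝ), -2 / Real.sqrt C₂) := by
      simp [Prod.smul_mk]
    rw [hq, hval]
    refine HasDerivAt.prodMk (hasDerivAt_const (0:ℝ) (0:ℝ))
      (HasDerivAt.prodMk (hasDerivAt_const (0:ℝ) (-C₂ * s ^ 3 + s)) ?_)
    have hlin : HasDerivAt (fun t : ℝ => -1 + t) 1 0 := by
      simpa using (hasDerivAt_id (0:ℝ)).const_add (-1)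
    have hnum : HasDerivAt (fun t : ℝ => ((-1+t)^2 - 1) * (s * (-1+t)))
        ((2 * (-1+0) ^ 1 * 1) * (s * (-1+0)) + (((-1+0)^2 - 1)) * (s * 1)) 0 :=
      ((hlin.pow 2).sub_const 1).mul (hlin.const_mul s)
    have hd := hnum.div hlin (by norm_num : (-1 + (0:ℝ)) ≠ 0)
    refine hd.congr_deriv (Eq.symm ?_)
    rw [hsdef]
    norm_num
    ring
  -- eigenvalue 2/√C₂ - 2, eigenvector (1,1,0)
  have e2 : Module.End.HasEigenvalue
      ((fderiv ℝ (Fdust C₂) (0, s, -1)).toLinearMap) (2 / Real.sqrt C₂ - 2) := by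
    apply eig_of_line hdiff (w := ((1:ℝ),(1:ℝ),(0:ℝ))) (by simp [Prod.ext_iff])
    have hq : (fun t : ℝ => Fdust C₂ ((0, s, -1) + t • ((1:ℝ),(1:ℝ),(0:ℝ)))) =
        fun t : ℝ => (t * ((s+t) * (2 - C₂*(s+t)) - 1),
          -C₂ * (s+t)^3 + (s+t) * t * (C₂*t + 2) + (s+t), (0:ℝ)) := by
      funext t
      simp only [Fdust, Prod.mk_add_mk, Prod.smul_mk, smul_eq_mul, Prod.mk.injEq]
      refine ⟨by ring, by ring, by ring⟩
    have hval : (2 / Real.sqrt C₂ - 2) • (((1:ℝ),(1:ℝ),(0:ℝ)) : ℝ×ℝ×ℝ) =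
        (2 / Real.sqrt C₂ - 2, 2 / Real.sqrt C₂ - 2, (0:ℝ)) := by
      simp [Prod.smul_mk]
    rw [hq, hval]
    have hl : HasDerivAt (fun t : ℝ => s + t) 1 0 := by
      simpa using (hasDerivAt_id (0:ℝ)).const_add s
    have hid : HasDerivAt (fun t : ℝ => t) 1 0 := hasDerivAt_id 0
    refine HasDerivAt.prodMk ?_ (HasDerivAt.prodMk ?_ (hasDerivAt_const (0:ℝ) (0:ℝ)))
    · have hinner : HasDerivAt (fun t : ℝ => (s+t) * (2 - C₂*(s+t)) - 1)
          (1 * (2 - C₂*(s+0)) + (s+0) * (-(C₂ * 1))) 0 :=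
        (hl.mul (((hl.const_mul C₂).neg).const_add 2)).sub_const 1
      have hd := hid.mul hinner
      refine hd.congr_deriv (Eq.symm ?_)
      have h2s : 2 / Real.sqrt C₂ - 2 = 2 * s - 2 := by rw [hsdef]; ring
      rw [h2s]
      linear_combination hCs
    · have ht1 : HasDerivAt (fun t : ℝ => (s+t) * t) (1 * 0 + (s+0) * 1) 0 := hl.mul hid
      have ht2 : HasDerivAt (fun t : ℝ => C₂*t + 2) (C₂ * 1) 0 :=
        (hid.const_mul C₂).add_const 2
      have hd := (((hl.pow 3).const_mul (-C₂)).add (ht1.mul ht2)).add hl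
      refine hd.congr_deriv (Eq.symm ?_)
      have h2s : 2 / Real.sqrt C₂ - 2 = 2 * s - 2 := by rw [hsdef]; ring
      rw [h2s]
      linear_combination 3 * hCs
  -- eigenvalue -2, eigenvector (0,1,0)
  have e3 : Module.End.HasEigenvalue
      ((fderiv ℝ (Fdust C₂) (0, s, -1)).toLinearMap) (-2) := by
    apply eig_of_line hdiff (w := ((0:ℝ),(1:ℝ),(0:ℝ))) (by simp [Prod.ext_iff])
    have hq : (fun t : ℝ => Fdust C₂ ((0, s, -1) + t • ((0:ℝ),(1:ℝ),(0:ℝ)))) =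
        fun t : ℝ => ((0:ℝ), -C₂ * (s+t)^3 + (s+t), (0:ℝ)) := by
      funext t
      simp only [Fdust, Prod.mk_add_mk, Prod.smul_mk, smul_eq_mul, Prod.mk.injEq]
      refine ⟨by ring, by ring, by ring⟩
    have hval : ((-2 : ℝ)) • (((0:ℝ),(1:ℝ),(0:ℝ)) : ℝ×ℝ×ℝ) =
        ((0:ℝ), (-2:ℝ), (0:ℝ)) := by
      simp [Prod.smul_mk]
    rw [hq, hval]
    have hl : HasDerivAt (fun t : ℝ => s + t) 1 0 := by
      simpa using (hasDerivAt_id (0:ℝ)).const_add s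
    refine HasDerivAt.prodMk (hasDerivAt_const (0:ℝ) (0:ℝ))
      (HasDerivAt.prodMk ?_ (hasDerivAt_const (0:ℝ) (0:ℝ)))
    have hd := ((hl.pow 3).const_mul (-C₂)).add hl
    refine hd.congr_deriv (Eq.symm ?_)
    linear_combination 3 * hCs
  -- equilibrium
  have heq : Fdust C₂ (0, s, -1) = 0 := by
    have h2 : -C₂ * s ^ 3 + s * 0 * (C₂ * 0 + 2) + s = 0 := by
      have h' : -C₂ * s ^ 3 + s * 0 * (C₂ * 0 + 2) + s = s * (1 - C₂ * s ^ 2) := by ring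
      rw [h', hCs]; ring
    simp only [Fdust, Prod.ext_iff]
    refine ⟨by norm_num, by simpa using h2, by norm_num⟩
  refine ⟨heq, e1, e2, e3, div_neg_of_neg_of_pos (by norm_num) hs0, by norm_num, ?_, ?_, ?_⟩
  · intro h
    have h1 : 1 < Real.sqrt C₂ := by nlinarith [Real.sqrt_nonneg C₂]
    have h2 : 2 / Real.sqrt C₂ < 2 := by
      rw [div_lt_iff₀ hs0]; nlinarith
    linarith
  · intro h
    have h1 : Real.sqrt C₂ < 1 := by nlinarith [Real.sqrt_nonneg C₂]
    have h2 : 2 < 2 / Real.sqrt C₂ := by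
      rw [lt_div_iff₀ hs0]; nlinarith
    linarith
  · intro h
    subst h
    norm_num [Real.sqrt_one]
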